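/- For every s ∈ (0,10), β₀(s) = 0 holds if and only if s = s₀*, where s₀* := (1880·√10 − 3070)/929 + 60·√(16·√10 + 61)/(80·√10 + 269). Moreover, 4 < s₀* < 4.5. -/

import Mathlib

/-- `β₀(s) = (3/10)·√(s²/4 − s + 5) + (2/(5√5))·|s − 5| − (1/(2√2))·|s − 2|`. -/
noncomputable def beta0 (s : ℝ) : ℝ :=
  3 / 10 * Real.sqrt (s ^ 2 / 4 - s + 5)
    + 2 / (5 * Real.sqrt 5) * |s - 5| - 1 / (2 * Real.sqrt 2) * |s - 2|

/-- `s₀* = (1880·√10 − 3070)/929 + 60·√(16·√10 + 61)/(80·√10 + 269)`. -/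
noncomputable def sZeroStar : ℝ :=
  (1880 * Real.sqrt 10 - 3070) / 929
    + 60 * Real.sqrt (16 * Real.sqrt 10 + 61) / (80 * Real.sqrt 10 + 269)

/-- On `(0,10)` the equation `β₀(s) = 0` holds iff `s = s₀*`, and
`4 < s₀* < 4.5`. -/
theorem beta0_root :
    (∀ s ∈ Set.Ioo (0 : ℝ) 10, beta0 s = 0 ↔ s = sZeroStar) ∧
    4 < sZeroStar ∧ sZeroStar < 4.5 := by
  set r := Real.sqrt 10 with hrdef
  set v := Real.sqrt 5 with hvdef
  set w := Real.sqrt 2 with hwdef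
  set u := Real.sqrt (16 * r + 61) with hudef
  have hr0 : (0:ℝ) ≤ r := Real.sqrt_nonneg _
  have hv0 : (0:ℝ) ≤ v := Real.sqrt_nonneg _
  have hw0 : (0:ℝ) ≤ w := Real.sqrt_nonneg _
  have hu0 : (0:ℝ) ≤ u := Real.sqrt_nonneg _
  have hr2 : r ^ 2 = 10 := Real.sq_sqrt (by norm_num)
  have hv2 : v ^ 2 = 5 := Real.sq_sqrt (by norm_num)
  have hw2 : w ^ 2 = 2 := Real.sq_sqrt (by norm_num)
  have hrlb : 3.162277 < r := by nlinarith only [hr2, hr0]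
  have hrub : r < 3.162278 := by nlinarith only [hr2, hr0]
  have hvlb : 2.2360 < v := by nlinarith only [hv2, hv0]
  have hvub : v < 2.2361 := by nlinarith only [hv2, hv0]
  have hwlb : 1.4142 < w := by nlinarith only [hw2, hw0]
  have hwub : w < 1.4143 := by nlinarith only [hw2, hw0]
  have hu2 : u ^ 2 = 16 * r + 61 := Real.sq_sqrt (by linarith only [hr0])
  have hulb : 10.5639 < u := by nlinarith only [hu2, hu0, hrlb]
  have huub : u < 10.5640 := by nlinarith only [hu2, hu0, hrub]
  have hvw : v * w = r := by
    rw [hvdef, hwdef, hrdef, ← Real.sqrt_mul (by norm_num)]; norm_num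
  have hA : 2 / (5 * v) = 2 * v / 25 := by
    rw [div_eq_div_iff (by positivity : (0:ℝ) < 5 * v).ne' (by norm_num : (25:ℝ) ≠ 0)]
    linear_combination (-10 : ℝ) * hv2
  have hB : 1 / (2 * w) = w / 4 := by
    rw [div_eq_div_iff (by positivity : (0:ℝ) < 2 * w).ne' (by norm_num : (4:ℝ) ≠ 0)]
    linear_combination (-2 : ℝ) * hw2
  have hD : (0:ℝ) < 80 * r + 269 := by linarith only [hr0]
  -- bounds on sZeroStar
  have hs1 : 3.0948 < (1880 * r - 3070) / 929 := by
    rw [lt_div_iff₀ (by norm_num)]; linarith only [hrlb]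
  have hs1' : (1880 * r - 3070) / 929 < 3.0949 := by
    rw [div_lt_iff₀ (by norm_num)]; linarith only [hrub]
  have hs2 : 1.2142 < 60 * u / (80 * r + 269) := by
    rw [lt_div_iff₀ hD]
    linarith only [mul_lt_mul_of_pos_left hrub (by norm_num : (0:ℝ) < 1.2142 * 80), hulb]
  have hs2' : 60 * u / (80 * r + 269) < 1.2143 := by
    rw [div_lt_iff₀ hD]
    linarith only [mul_lt_mul_of_pos_left hrlb (by norm_num : (0:ℝ) < 1.2143 * 80), huub]
  have hZlb : 4 < sZeroStar := by
    rw [sZeroStar, ← hrdef, ← hudef]; linarith only [hs1, hs2]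
  have hZub : sZeroStar < 4.5 := by
    rw [sZeroStar, ← hrdef, ← hudef]; linarith only [hs1', hs2']
  -- the quadratic satisfied by sZeroStar - 2
  have h1 : (1880 * r - 3070) / 929 = (280 * r + 730) / (80 * r + 269) := by
    rw [div_eq_div_iff (by norm_num) hD.ne']
    linear_combination (150400 : ℝ) * hr2
  have hsplit : sZeroStar - 2 = (120 * r + 192 + 60 * u) / (80 * r + 269) := by
    rw [sZeroStar, ← hrdef, ← hudef, h1, ← add_div, eq_div_iff hD.ne', sub_mul,
      div_mul_cancel₀ _ hD.ne']
    ring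
  have hkey : (120 * r + 192 + 60 * u) ^ 2
      - (240 * r + 384) * (120 * r + 192 + 60 * u) - 144 * (80 * r + 269) = 0 := by
    linear_combination (3600 : ℝ) * hu2 - (14400 : ℝ) * hr2
  have hx : (sZeroStar - 2) * (80 * r + 269) = 120 * r + 192 + 60 * u := by
    rw [hsplit, div_mul_cancel₀ _ hD.ne']
  have hQ0' : ((269 + 80 * r) * (sZeroStar - 2) ^ 2
      - (240 * r + 384) * (sZeroStar - 2) - 144) * (80 * r + 269) ^ 2 = 0 := by
    linear_combination ((80 * r + 269) * ((sZeroStar - 2) * (80 * r + 269)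
      + (120 * r + 192 + 60 * u) - (240 * r + 384))) * hx + (80 * r + 269) * hkey
  have hQ0 : (269 + 80 * r) * (sZeroStar - 2) ^ 2
      - (240 * r + 384) * (sZeroStar - 2) - 144 = 0 := by
    rcases mul_eq_zero.mp hQ0' with h | h
    · exact h
    · exact absurd h (pow_ne_zero _ hD.ne')
  refine ⟨?_, hZlb, hZub⟩
  intro s hs
  obtain ⟨hs0, hs10⟩ := hs
  have hexp : (s - 2) ^ 2 = s ^ 2 - 4 * s + 4 := by ring
  have harg : (0:ℝ) ≤ s ^ 2 / 4 - s + 5 := by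
    linarith only [sq_nonneg (s - 2), hexp]
  set t := Real.sqrt (s ^ 2 / 4 - s + 5) with htdef
  have ht0 : (0:ℝ) ≤ t := Real.sqrt_nonneg _
  have ht2 : t ^ 2 = s ^ 2 / 4 - s + 5 := Real.sq_sqrt harg
  constructor
  · intro h0
    rw [beta0, ← hvdef, ← hwdef, ← htdef, hA, hB] at h0
    rcases le_or_gt s 2 with h2 | h2
    · -- β₀ > 0 on (0,2], contradiction
      exfalso
      rw [abs_of_nonpos (by linarith only [h2]), abs_of_nonpos (by linarith only [h2])] at h0
      have ht4 : 2 ≤ t := by nlinarith only [ht2, ht0, sq_nonneg (s - 2)]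
      linarith only [h0, ht4, hs0,
        mul_nonneg (by linarith only [hvlb] : (0:ℝ) ≤ v - 2.2360)
          (by linarith only [h2] : (0:ℝ) ≤ 5 - s),
        mul_nonneg (by linarith only [hwub] : (0:ℝ) ≤ 1.4143 - w)
          (by linarith only [h2] : (0:ℝ) ≤ 2 - s)]
    rcases lt_or_ge s 5 with h5 | h5
    · -- main case
      rw [abs_of_nonpos (by linarith only [h5]), abs_of_nonneg (by linarith only [h2])] at h0
      have hR : 3 / 10 * t = w / 4 * (s - 2) - 2 * v / 25 * (5 - s) := by
        linarith only [h0]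
      have hsq : (3 / 10 * t) ^ 2 = (w / 4 * (s - 2) - 2 * v / 25 * (5 - s)) ^ 2 := by
        rw [hR]
      have hQ : (269 + 80 * r) * (s - 2) ^ 2 - (240 * r + 384) * (s - 2) - 144 = 0 := by
        linear_combination (-2000 : ℝ) * hsq + (180 : ℝ) * ht2
          - 125 * (s - 2) ^ 2 * hw2 - (64 / 5) * (5 - s) ^ 2 * hv2
          + 80 * (s - 2) * (5 - s) * hvw
      have hfac : (s - 2 - (sZeroStar - 2)) *
          ((269 + 80 * r) * (s - 2 + (sZeroStar - 2)) - (240 * r + 384)) = 0 := by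
        linear_combination hQ - hQ0
      rcases mul_eq_zero.mp hfac with h | h
      · linarith only [h]
      · exfalso
        have hxy : (80 * r + 269) * ((s - 2) * (sZeroStar - 2)) = -144 := by
          linear_combination (s - 2) * h - hQ
        linarith only [hxy, mul_pos hD (mul_pos
          (by linarith only [h2] : (0:ℝ) < s - 2)
          (by linarith only [hZlb] : (0:ℝ) < sZeroStar - 2))]
    · -- β₀ < 0 on [5,10), contradiction
      exfalso
      rw [abs_of_nonneg (by linarith only [h5]), abs_of_nonneg (by linarith only [h2])] at h0
      have hRpos : 0 < w / 4 * (s - 2) - 2 * v / 25 * (s - 5) := by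
        linarith only [h5,
          mul_nonneg (by linarith only [hwlb] : (0:ℝ) ≤ w - 1.4142)
            (by linarith only [h2] : (0:ℝ) ≤ s - 2),
          mul_nonneg (by linarith only [hvub] : (0:ℝ) ≤ 2.2361 - v)
            (by linarith only [h5] : (0:ℝ) ≤ s - 5)]
      have hR2 : (w / 4 * (s - 2) - 2 * v / 25 * (s - 5)) ^ 2
          = 1 / 8 * (s - 2) ^ 2 - r / 25 * (s - 2) * (s - 5) + 4 / 125 * (s - 5) ^ 2 := by
        linear_combination (1 / 16) * (s - 2) ^ 2 * hw2 + (4 / 625) * (s - 5) ^ 2 * hv2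
          - (1 / 25) * (s - 2) * (s - 5) * hvw
      have hpoly : 9 / 100 * (s ^ 2 / 4 - s + 5)
          < 1 / 8 * (s - 2) ^ 2 - r / 25 * (s - 2) * (s - 5) + 4 / 125 * (s - 5) ^ 2 := by
        nlinarith only [h5, hs10, sq_nonneg (s - 2),
          mul_nonneg (by linarith only [hrub] : (0:ℝ) ≤ 3.162278 - r)
            (mul_nonneg (by linarith only [h5] : (0:ℝ) ≤ s - 5)
              (by linarith only [h5] : (0:ℝ) ≤ s - 2)),
          mul_nonneg (by linarith only [hrlb] : (0:ℝ) ≤ r - 3.162277)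
            (by linarith only [h5] : (0:ℝ) ≤ s - 2)]
      have hlt : (3 / 10 * t) ^ 2 < (w / 4 * (s - 2) - 2 * v / 25 * (s - 5)) ^ 2 := by
        rw [hR2]; nlinarith only [ht2, hpoly]
      have hReq : 3 / 10 * t = w / 4 * (s - 2) - 2 * v / 25 * (s - 5) := by
        linarith only [h0]
      rw [hReq] at hlt
      exact lt_irrefl _ hlt
  · rintro rfl
    rw [beta0, ← hvdef, ← hwdef, ← htdef, hA, hB,
      abs_of_nonpos (by linarith only [hZub] : sZeroStar - 5 ≤ 0),
      abs_of_nonneg (by linarith only [hZlb] : (0:ℝ) ≤ sZeroStar - 2)]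
    have hRpos : 0 < w / 4 * (sZeroStar - 2) - 2 * v / 25 * (5 - sZeroStar) := by
      linarith only [hZlb, hZub,
        mul_nonneg (by linarith only [hwlb] : (0:ℝ) ≤ w - 1.4142)
          (by linarith only [hZlb] : (0:ℝ) ≤ sZeroStar - 2),
        mul_nonneg (by linarith only [hvub] : (0:ℝ) ≤ 2.2361 - v)
          (by linarith only [hZub] : (0:ℝ) ≤ 5 - sZeroStar)]
    have hsq : (3 / 10 * t) ^ 2
        = (w / 4 * (sZeroStar - 2) - 2 * v / 25 * (5 - sZeroStar)) ^ 2 := by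
      linear_combination (9 / 100) * ht2 - (1 / 2000) * hQ0
        - (1 / 16) * (sZeroStar - 2) ^ 2 * hw2
        - (4 / 625) * (5 - sZeroStar) ^ 2 * hv2
        + (1 / 25) * (sZeroStar - 2) * (5 - sZeroStar) * hvw
    have hfac : (3 / 10 * t - (w / 4 * (sZeroStar - 2) - 2 * v / 25 * (5 - sZeroStar))) *
        (3 / 10 * t + (w / 4 * (sZeroStar - 2) - 2 * v / 25 * (5 - sZeroStar))) = 0 := by
      linear_combination hsq
    rcases mul_eq_zero.mp hfac with h | h
    · linarith only [h]
    · exfalso; linarith only [h, ht0, hRpos]
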